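/- Under the linear coercivity assumptions, let 𝒟 be a gradient discretisation, ū the unique solution of the weak linear problem and u_𝒟 ∈ X_𝒟 a solution of the linear gradient scheme. Then the reverse inequalities hold: W_𝒟(𝐚(Gū)+𝐅) ≤ ᾱ ‖Gū − G_𝒟 u_𝒟‖_𝐋 + ᾱ C_𝒟 ‖ū − P_𝒟 u_𝒟‖_L (in particular W_𝒟(𝐚(Gū)+𝐅) is bounded by ᾱ times the total discretisation error) and S_𝒟(ū) ≤ ‖ū − P_𝒟 u_𝒟‖_L + ‖Gū − G_𝒟 u_𝒟‖_𝐋. -/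

import Mathlib

open NormedSpace Filter Topology

noncomputable section

variable {L Lv : Type*} [NormedAddCommGroup L] [NormedSpace ℝ L]
  [NormedAddCommGroup Lv] [NormedSpace ℝ Lv]

/-- The seminorm `|u|_{L,V} = sup_{μ ∈ V \ {0}} |⟨μ,u⟩| / ‖μ‖` (equal to `0` when `V = {0}`,
since `sSup ∅ = 0` in `ℝ`). -/
noncomputable def semV (V : Submodule ℝ (StrongDual ℝ L)) (u : L) : ℝ :=
  sSup ((fun μ : StrongDual ℝ L => |μ u| / ‖μ‖) '' {μ : StrongDual ℝ L | μ ∈ V ∧ μ ≠ 0})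

/-- `IsWDpair W_G G φ w` says that `φ ∈ 𝐖_D` with `D φ = w`, i.e. the abstract Stokes formula
`⟨φ, G u⟩ + ⟨w, u⟩ = 0` holds for all `u ∈ W_G`. -/
def IsWDpair (WG : Submodule ℝ L) (G : ↥WG →ₗ[ℝ] Lv) (φ : StrongDual ℝ Lv) (w : StrongDual ℝ L) : Prop :=
  ∀ u : ↥WG, φ (G u) + w (u : L) = 0

/-- A gradient discretisation `𝒟 = (X_𝒟, P_𝒟, G_𝒟)`: a finite-dimensional real vector space
`X`, a function reconstruction `P : X → L` and a gradient reconstruction `Gd : X → Lv`, such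
that `v ↦ (|P v|_{L,V}^p + ‖Gd v‖^p)^{1/p}` is a norm on `X` (definiteness is the only
non-automatic condition). -/
structure GradDisc (L Lv : Type*) [NormedAddCommGroup L] [NormedSpace ℝ L]
    [NormedAddCommGroup Lv] [NormedSpace ℝ Lv]
    (V : Submodule ℝ (StrongDual ℝ L)) (p : ℝ) where
  X : Type
  [instAddCommGroup : AddCommGroup X]
  [instModule : Module ℝ X]
  [instFin : FiniteDimensional ℝ X]
  P : X →ₗ[ℝ] L
  Gd : X →ₗ[ℝ] Lv
  dnorm_definite : ∀ v : X, (semV V (P v) ^ p + ‖Gd v‖ ^ p) ^ (1 / p) = 0 → v = 0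

attribute [instance] GradDisc.instAddCommGroup GradDisc.instModule GradDisc.instFin

namespace GradDisc

variable {V : Submodule ℝ (StrongDual ℝ L)} {p : ℝ}

/-- The discrete norm `‖v‖_𝒟 = (|P_𝒟 v|_{L,V}^p + ‖G_𝒟 v‖_Lv^p)^{1/p}`. -/
noncomputable def dnorm (D : GradDisc L Lv V p) (v : D.X) : ℝ :=
  (semV V (D.P v) ^ p + ‖D.Gd v‖ ^ p) ^ (1 / p)

/-- `C_𝒟 = max_{v ≠ 0} ‖P_𝒟 v‖_L / ‖v‖_𝒟`. -/
noncomputable def CD (D : GradDisc L Lv V p) : ℝ :=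
  sSup ((fun v : D.X => ‖D.P v‖ / D.dnorm v) '' {v : D.X | v ≠ 0})

/-- `W_𝒟(φ) = sup_{u ≠ 0} |⟨φ, G_𝒟 u⟩ + ⟨D φ, P_𝒟 u⟩| / ‖u‖_𝒟`, where `w = D φ`. -/
noncomputable def WDdef (D : GradDisc L Lv V p) (φ : StrongDual ℝ Lv) (w : StrongDual ℝ L) : ℝ :=
  sSup ((fun u : D.X => |φ (D.Gd u) + w (D.P u)| / D.dnorm u) '' {u : D.X | u ≠ 0})

/-- `S_𝒟(φ) = min_v (‖P_𝒟 v − φ‖_L + ‖G_𝒟 v − G φ‖_Lv)`, where `gφ = G φ`. -/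
noncomputable def SDdef (D : GradDisc L Lv V p) (φ : L) (gφ : Lv) : ℝ :=
  sInf (Set.range fun v : D.X => ‖D.P v - φ‖ + ‖D.Gd v - gφ‖)

end GradDisc

/-- Coercivity of a sequence of gradient discretisations: `sup_m C_{𝒟_m} < ∞`. -/
def Coercive {V : Submodule ℝ (StrongDual ℝ L)} {p : ℝ} (D : ℕ → GradDisc L Lv V p) : Prop :=
  ∃ C : ℝ, ∀ m : ℕ, (D m).CD ≤ C

/-- Limit-conformity: `W_{𝒟_m}(φ) → 0` for every `φ ∈ 𝐖_D` (with `w = D φ`). -/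
def LimitConforming (WG : Submodule ℝ L) (G : ↥WG →ₗ[ℝ] Lv)
    {V : Submodule ℝ (StrongDual ℝ L)} {p : ℝ} (D : ℕ → GradDisc L Lv V p) : Prop :=
  ∀ (φ : StrongDual ℝ Lv) (w : StrongDual ℝ L), IsWDpair WG G φ w →
    Filter.Tendsto (fun m => (D m).WDdef φ w) Filter.atTop (𝓝 0)

/-- Consistency: `S_{𝒟_m}(φ) → 0` for every `φ ∈ W_G`. -/
def Consistent (WG : Submodule ℝ L) (G : ↥WG →ₗ[ℝ] Lv)
    {V : Submodule ℝ (StrongDual ℝ L)} {p : ℝ} (D : ℕ → GradDisc L Lv V p) : Prop :=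
  ∀ u : ↥WG, Filter.Tendsto (fun m => (D m).SDdef (u : L) (G u)) Filter.atTop (𝓝 0)

/-- Compactness: bounded discrete sequences have relatively compact reconstructions in `L`. -/
def CompactSeq {V : Submodule ℝ (StrongDual ℝ L)} {p : ℝ} (D : ℕ → GradDisc L Lv V p) : Prop :=
  ∀ u : (m : ℕ) → (D m).X, (∃ C : ℝ, ∀ m : ℕ, (D m).dnorm (u m) ≤ C) →
    IsCompact (closure (Set.range fun m => (D m).P (u m)))



section AuxLemmas

variable {L Lv : Type*} [NormedAddCommGroup L] [NormedSpace ℝ L]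
  [NormedAddCommGroup Lv] [NormedSpace ℝ Lv]

lemma semV_nonneg (V : Submodule ℝ (StrongDual ℝ L)) (u : L) : 0 ≤ semV V u :=
  Real.sSup_nonneg (by rintro x ⟨μ, -, rfl⟩; positivity)

lemma semV_mem_le (V : Submodule ℝ (StrongDual ℝ L)) (u : L) {μ : StrongDual ℝ L}
    (hμ : μ ∈ V ∧ μ ≠ 0) : |μ u| / ‖μ‖ ≤ ‖u‖ := by
  rw [div_le_iff₀ (norm_pos_iff.mpr hμ.2)]
  calc |μ u| = ‖μ u‖ := (Real.norm_eq_abs _).symm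
    _ ≤ ‖μ‖ * ‖u‖ := μ.le_opNorm u
    _ = ‖u‖ * ‖μ‖ := mul_comm _ _

lemma semV_bddAbove (V : Submodule ℝ (StrongDual ℝ L)) (u : L) :
    BddAbove ((fun μ : StrongDual ℝ L => |μ u| / ‖μ‖) '' {μ : StrongDual ℝ L | μ ∈ V ∧ μ ≠ 0}) :=
  ⟨‖u‖, by rintro x ⟨μ, hμ, rfl⟩; exact semV_mem_le V u hμ⟩

lemma semV_le_norm (V : Submodule ℝ (StrongDual ℝ L)) (u : L) : semV V u ≤ ‖u‖ :=
  Real.sSup_le (by rintro x ⟨μ, hμ, rfl⟩; exact semV_mem_le V u hμ) (norm_nonneg u)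

lemma semV_add_le (V : Submodule ℝ (StrongDual ℝ L)) (a b : L) :
    semV V (a + b) ≤ semV V a + semV V b := by
  apply Real.sSup_le _ (add_nonneg (semV_nonneg V a) (semV_nonneg V b))
  rintro x ⟨μ, hμ, rfl⟩
  have h1 : |μ a| / ‖μ‖ ≤ semV V a := le_csSup (semV_bddAbove V a) ⟨μ, hμ, rfl⟩
  have h2 : |μ b| / ‖μ‖ ≤ semV V b := le_csSup (semV_bddAbove V b) ⟨μ, hμ, rfl⟩
  have hpos : (0:ℝ) < ‖μ‖ := norm_pos_iff.mpr hμ.2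
  have h3 : |μ (a + b)| / ‖μ‖ ≤ (|μ a| + |μ b|) / ‖μ‖ :=
    div_le_div_of_nonneg_right (by rw [map_add]; exact abs_add_le _ _) hpos.le
  rw [add_div] at h3
  calc (fun μ : StrongDual ℝ L => |μ (a + b)| / ‖μ‖) μ = |μ (a + b)| / ‖μ‖ := rfl
    _ ≤ |μ a| / ‖μ‖ + |μ b| / ‖μ‖ := h3
    _ ≤ semV V a + semV V b := add_le_add h1 h2

lemma semV_neg (V : Submodule ℝ (StrongDual ℝ L)) (a : L) : semV V (-a) = semV V a := by
  simp only [semV, map_neg, abs_neg]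

lemma sqrt_euclid (a b c d : ℝ) :
    Real.sqrt ((a + c) ^ 2 + (b + d) ^ 2) ≤ Real.sqrt (a ^ 2 + b ^ 2) + Real.sqrt (c ^ 2 + d ^ 2) := by
  calc Real.sqrt ((a + c) ^ 2 + (b + d) ^ 2)
      = ‖(((a + c : ℝ) : ℂ) + ((b + d : ℝ) : ℂ) * Complex.I)‖ :=
        (Complex.norm_add_mul_I _ _).symm
    _ = ‖(((a : ℝ) + (b : ℝ) * Complex.I) + ((c : ℝ) + (d : ℝ) * Complex.I))‖ := by
        congr 1; push_cast; ring
    _ ≤ ‖((a : ℝ) + (b : ℝ) * Complex.I)‖ +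
        ‖((c : ℝ) + (d : ℝ) * Complex.I)‖ := norm_add_le _ _
    _ = _ := by rw [Complex.norm_add_mul_I, Complex.norm_add_mul_I]

lemma GradDisc.dnorm_eq_sqrt {V : Submodule ℝ (StrongDual ℝ L)} (D : GradDisc L Lv V 2) (v : D.X) :
    D.dnorm v = Real.sqrt (semV V (D.P v) ^ 2 + ‖D.Gd v‖ ^ 2) := by
  rw [GradDisc.dnorm, Real.sqrt_eq_rpow, Real.rpow_two, Real.rpow_two]

end AuxLemmas

theorem linear_gradient_scheme_reverse_estimates
    [CompleteSpace L] [CompleteSpace Lv]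
    [TopologicalSpace.SeparableSpace L] [TopologicalSpace.SeparableSpace Lv]
    (hreflL : Function.Surjective ⇑(inclusionInDoubleDual ℝ L))
    (hreflLv : Function.Surjective ⇑(inclusionInDoubleDual ℝ Lv))
    (WG : Submodule ℝ L) (hWGdense : Dense (WG : Set L))
    (G : ↥WG →ₗ[ℝ] Lv)
    (hGclosed : IsClosed (Set.range fun u : ↥WG => ((u : L), G u)))
    (V : Submodule ℝ (StrongDual ℝ L)) (hVclosed : IsClosed (V : Set (StrongDual ℝ L)))
    (CWGV : ℝ) (hCWGV : 0 < CWGV)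
    (hequiv : ∀ u : ↥WG, (‖(u : L)‖ ^ (2:ℝ) + ‖G u‖ ^ (2:ℝ)) ^ (1/2 : ℝ) ≤
      CWGV * (semV V (u : L) ^ (2:ℝ) + ‖G u‖ ^ (2:ℝ)) ^ (1/2 : ℝ))
    (aV : Lv →L[ℝ] StrongDual ℝ Lv) (aS : L →L[ℝ] StrongDual ℝ L)
    (abar : ℝ) (haVnorm : ‖aV‖ ≤ abar) (haSnorm : ‖aS‖ ≤ abar)
    (alph : ℝ) (halph : 0 < alph)
    (haVcoer : ∀ gv : Lv, alph * ‖gv‖ ^ (2:ℝ) ≤ aV gv gv)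
    (haScoer : ∀ v : L, alph * semV V v ^ (2:ℝ) ≤ aS v v)
    (f : StrongDual ℝ L) (F : StrongDual ℝ Lv)
    (D : GradDisc L Lv V 2)
    (ubar : ↥WG)
    (hubar : ∀ v : ↥WG,
      aV (G ubar) (G v) + aS (ubar : L) (v : L) = f (v : L) - F (G v))
    (u : D.X)
    (hu : ∀ v : D.X,
      aV (D.Gd u) (D.Gd v) + aS (D.P u) (D.P v) = f (D.P v) - F (D.Gd v)) :
    (∀ w : StrongDual ℝ L, IsWDpair WG G (aV (G ubar) + F) w →
        D.WDdef (aV (G ubar) + F) w ≤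
          abar * ‖G ubar - D.Gd u‖ + abar * D.CD * ‖(ubar : L) - D.P u‖) ∧
    D.SDdef (ubar : L) (G ubar) ≤ ‖(ubar : L) - D.P u‖ + ‖G ubar - D.Gd u‖ := by
  classical
  have habar0 : (0:ℝ) ≤ abar := le_trans (norm_nonneg aV) haVnorm
  -- the discrete norm makes D.X a normed space
  letI : NormedAddCommGroup D.X := AddGroupNorm.toNormedAddCommGroup
    { toFun := D.dnorm
      map_zero' := by
        rw [D.dnorm_eq_sqrt]
        have h0 : semV V (0 : L) = 0 :=
          le_antisymm ((semV_le_norm V 0).trans_eq norm_zero) (semV_nonneg V 0)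
        simp [h0]
      add_le' := by
        intro a b
        rw [D.dnorm_eq_sqrt, D.dnorm_eq_sqrt, D.dnorm_eq_sqrt]
        have h1 : semV V (D.P (a + b)) ≤ semV V (D.P a) + semV V (D.P b) := by
          rw [map_add]; exact semV_add_le V _ _
        have h2 : ‖D.Gd (a + b)‖ ≤ ‖D.Gd a‖ + ‖D.Gd b‖ := by
          rw [map_add]; exact norm_add_le _ _
        calc Real.sqrt (semV V (D.P (a + b)) ^ 2 + ‖D.Gd (a + b)‖ ^ 2)
            ≤ Real.sqrt ((semV V (D.P a) + semV V (D.P b)) ^ 2 + (‖D.Gd a‖ + ‖D.Gd b‖) ^ 2) := by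
              apply Real.sqrt_le_sqrt
              have := semV_nonneg V (D.P (a + b))
              gcongr <;> positivity
          _ ≤ _ := sqrt_euclid _ _ _ _
      neg' := by
        intro a
        rw [D.dnorm_eq_sqrt, D.dnorm_eq_sqrt, map_neg, map_neg, semV_neg, norm_neg]
      eq_zero_of_map_eq_zero' := fun v h => D.dnorm_definite v h }
  have hnorm : ∀ v : D.X, ‖v‖ = D.dnorm v := fun _ => rfl
  letI : NormedSpace ℝ D.X := by
    refine ⟨fun c v => ?_⟩
    rw [hnorm, hnorm, D.dnorm_eq_sqrt, D.dnorm_eq_sqrt, map_smul, map_smul, norm_smul]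
    have hsem : semV V (c • D.P v) ≤ ‖c‖ * semV V (D.P v) := by
      apply Real.sSup_le _ (mul_nonneg (norm_nonneg c) (semV_nonneg V (D.P v)))
      rintro x ⟨μ, hμ, rfl⟩
      have heq : (fun μ : StrongDual ℝ L => |μ (c • D.P v)| / ‖μ‖) μ
          = |c| * (|μ (D.P v)| / ‖μ‖) := by
        show |μ (c • D.P v)| / ‖μ‖ = _
        rw [map_smul]; simp [abs_mul, mul_div_assoc]
      rw [heq, Real.norm_eq_abs]
      exact mul_le_mul_of_nonneg_left (le_csSup (semV_bddAbove V (D.P v)) ⟨μ, hμ, rfl⟩)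
        (abs_nonneg c)
    have h1 : Real.sqrt (semV V (c • D.P v) ^ 2 + (‖c‖ * ‖D.Gd v‖) ^ 2) ≤
        Real.sqrt ((‖c‖ * semV V (D.P v)) ^ 2 + (‖c‖ * ‖D.Gd v‖) ^ 2) := by
      apply Real.sqrt_le_sqrt
      gcongr
      exact semV_nonneg V _
    refine h1.trans (le_of_eq ?_)
    rw [mul_pow, mul_pow, ← mul_add, Real.sqrt_mul (by positivity), Real.sqrt_sq (norm_nonneg c)]
  have dpos : ∀ v : D.X, v ≠ 0 → 0 < D.dnorm v := fun v hv => by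
    rw [← hnorm]; exact norm_pos_iff.mpr hv
  have dnn : ∀ v : D.X, 0 ≤ D.dnorm v := fun v => by rw [← hnorm]; exact norm_nonneg v
  -- continuity of P w.r.t. the discrete norm
  set Pc : D.X →L[ℝ] L := LinearMap.toContinuousLinearMap D.P with hPcdef
  have hPc : ∀ v : D.X, ‖D.P v‖ ≤ ‖Pc‖ * D.dnorm v := fun v => by
    rw [← hnorm]; exact Pc.le_opNorm v
  have hCDbdd : BddAbove ((fun v : D.X => ‖D.P v‖ / D.dnorm v) '' {v : D.X | v ≠ 0}) := by
    refine ⟨‖Pc‖, ?_⟩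
    rintro x ⟨v, hv, rfl⟩
    rw [div_le_iff₀ (dpos v hv)]
    exact hPc v
  have hCD0 : 0 ≤ D.CD :=
    Real.sSup_nonneg (by rintro x ⟨v, -, rfl⟩; exact div_nonneg (norm_nonneg _) (dnn v))
  have hP_le : ∀ v : D.X, ‖D.P v‖ ≤ D.CD * D.dnorm v := by
    intro v
    by_cases hv : v = 0
    · subst hv
      simp only [map_zero, norm_zero]
      exact mul_nonneg hCD0 (dnn 0)
    · have : ‖D.P v‖ / D.dnorm v ≤ D.CD := le_csSup hCDbdd ⟨v, hv, rfl⟩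
      rwa [div_le_iff₀ (dpos v hv)] at this
  have hG_le : ∀ v : D.X, ‖D.Gd v‖ ≤ D.dnorm v := by
    intro v
    rw [D.dnorm_eq_sqrt]
    calc ‖D.Gd v‖ = Real.sqrt (‖D.Gd v‖ ^ 2) := (Real.sqrt_sq (norm_nonneg _)).symm
      _ ≤ _ := Real.sqrt_le_sqrt (le_add_of_nonneg_left (sq_nonneg _))
  constructor
  · intro w hw
    -- identify w with aS ū - f using density
    have hw0 : IsWDpair WG G (aV (G ubar) + F) (aS (ubar : L) - f) := by
      intro v
      have h := hubar v
      simp only [ContinuousLinearMap.add_apply, ContinuousLinearMap.sub_apply]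
      linarith
    have hweq : w = aS (ubar : L) - f := by
      apply DFunLike.coe_injective
      apply Continuous.ext_on hWGdense w.continuous (aS (ubar : L) - f).continuous
      intro x hx
      have h1 := hw ⟨x, hx⟩
      have h2 := hw0 ⟨x, hx⟩
      simp only at h1 h2
      linarith
    subst hweq
    apply Real.sSup_le
    · rintro x ⟨v, hv, rfl⟩
      rw [div_le_iff₀ (dpos v hv)]
      have key : (aV (G ubar) + F) (D.Gd v) + (aS (ubar : L) - f) (D.P v)
          = aV (G ubar - D.Gd u) (D.Gd v) + aS ((ubar : L) - D.P u) (D.P v) := by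
        have h := hu v
        simp only [ContinuousLinearMap.add_apply, ContinuousLinearMap.sub_apply, map_sub]
        linarith
      have b1 : |aV (G ubar - D.Gd u) (D.Gd v)| ≤ abar * ‖G ubar - D.Gd u‖ * ‖D.Gd v‖ := by
        calc |aV (G ubar - D.Gd u) (D.Gd v)| = ‖aV (G ubar - D.Gd u) (D.Gd v)‖ :=
              (Real.norm_eq_abs _).symm
          _ ≤ ‖aV‖ * ‖G ubar - D.Gd u‖ * ‖D.Gd v‖ := aV.le_opNorm₂ _ _
          _ ≤ abar * ‖G ubar - D.Gd u‖ * ‖D.Gd v‖ := by gcongr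
      have b2 : |aS ((ubar : L) - D.P u) (D.P v)| ≤ abar * ‖(ubar : L) - D.P u‖ * ‖D.P v‖ := by
        calc |aS ((ubar : L) - D.P u) (D.P v)| = ‖aS ((ubar : L) - D.P u) (D.P v)‖ :=
              (Real.norm_eq_abs _).symm
          _ ≤ ‖aS‖ * ‖(ubar : L) - D.P u‖ * ‖D.P v‖ := aS.le_opNorm₂ _ _
          _ ≤ abar * ‖(ubar : L) - D.P u‖ * ‖D.P v‖ := by gcongr
      calc |(aV (G ubar) + F) (D.Gd v) + (aS (ubar : L) - f) (D.P v)|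
          = |aV (G ubar - D.Gd u) (D.Gd v) + aS ((ubar : L) - D.P u) (D.P v)| := by rw [key]
        _ ≤ |aV (G ubar - D.Gd u) (D.Gd v)| + |aS ((ubar : L) - D.P u) (D.P v)| := abs_add_le _ _
        _ ≤ abar * ‖G ubar - D.Gd u‖ * ‖D.Gd v‖ + abar * ‖(ubar : L) - D.P u‖ * ‖D.P v‖ :=
            add_le_add b1 b2
        _ ≤ abar * ‖G ubar - D.Gd u‖ * D.dnorm v
            + abar * ‖(ubar : L) - D.P u‖ * (D.CD * D.dnorm v) := by
            refine add_le_add ?_ ?_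
            · exact mul_le_mul_of_nonneg_left (hG_le v) (by positivity)
            · exact mul_le_mul_of_nonneg_left (hP_le v) (by positivity)
        _ = (abar * ‖G ubar - D.Gd u‖ + abar * D.CD * ‖(ubar : L) - D.P u‖) * D.dnorm v := by
            ring
    · exact add_nonneg (mul_nonneg habar0 (norm_nonneg _))
        (mul_nonneg (mul_nonneg habar0 hCD0) (norm_nonneg _))
  · have hbdd : BddBelow (Set.range fun v : D.X => ‖D.P v - (ubar : L)‖ + ‖D.Gd v - G ubar‖) := by
      refine ⟨0, ?_⟩
      rintro x ⟨v, rfl⟩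
      positivity
    have hle := csInf_le hbdd ⟨u, rfl⟩
    rw [GradDisc.SDdef]
    refine hle.trans (le_of_eq ?_)
    show ‖D.P u - (ubar : L)‖ + ‖D.Gd u - G ubar‖ = _
    rw [norm_sub_rev (D.P u), norm_sub_rev (D.Gd u)]
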